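/- For every function f : O → ℝ, the Taibleson variation is bounded above by the Beer variation: V_Taib(f) ≤ V_Beer(f). -/

import Mathlib

open MeasureTheory Set Filter Topology
open scoped ENNReal NNReal

noncomputable section

namespace NAKoksma

variable (K : Type*) [NontriviallyNormedField K] [IsUltrametricDist K]

/-- The ring of integers `O = {x : K | ‖x‖ ≤ 1}` of a non-Archimedean normed field. -/
def RoI : Subring K where
  carrier := {x : K | ‖x‖ ≤ 1}
  mul_mem' := fun {a b} ha hb => by
    simp only [Set.mem_setOf_eq] at *
    calc ‖a * b‖ = ‖a‖ * ‖b‖ := norm_mul a b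
      _ ≤ 1 * 1 := mul_le_mul ha hb (norm_nonneg b) zero_le_one
      _ = 1 := one_mul 1
  one_mem' := by simp
  add_mem' := fun {a b} ha hb => by
    simp only [Set.mem_setOf_eq] at *
    exact (IsUltrametricDist.norm_add_le_max a b).trans (max_le ha hb)
  zero_mem' := by simp
  neg_mem' := fun {a} ha => by
    simp only [Set.mem_setOf_eq, norm_neg] at *
    exact ha

variable (q : ℕ)

/-- The disc of radius `q ^ (-n)` centered at `a` in the ring of integers. -/
def disc (a : RoI K) (n : ℕ) : Set (RoI K) :=
  {x : RoI K | ‖(x : K) - (a : K)‖ ≤ (q : ℝ) ^ (-(n : ℤ))}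

/-- A subset of `O` is a disc if it is of the form `D_r(a)` with `r = q^(-n)`, `0 < r ≤ 1`. -/
def IsDisc (D : Set (RoI K)) : Prop := ∃ (a : RoI K) (n : ℕ), D = disc K q a n

/-- A Taibleson partition: a finite collection of discs partitioning `O`. -/
def IsTaibPartition (P : Finset (Set (RoI K))) : Prop :=
  (∀ D ∈ P, IsDisc K q D) ∧ (P : Set (Set (RoI K))).PairwiseDisjoint id ∧
    ⋃₀ (P : Set (Set (RoI K))) = Set.univ

/-- `V_Π(f) = Σ_{D ∈ Π} sup_{x,y ∈ D} (f x - f y)`, valued in `[0,∞]`. -/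
def VPi (f : RoI K → ℝ) (P : Finset (Set (RoI K))) : ℝ≥0∞ :=
  ∑ D ∈ P, ⨆ x ∈ D, ⨆ y ∈ D, ENNReal.ofReal (f x - f y)

/-- The Taibleson variation `V_Taib(f) = sup_Π V_Π(f)`. -/
def VTaib (f : RoI K → ℝ) : ℝ≥0∞ :=
  ⨆ P : {P : Finset (Set (RoI K)) // IsTaibPartition K q P}, VPi K f P.1

variable [MeasurableSpace K]

/-- The discrepancy `Δ(X) = sup_D | |X ∩ D| / |X| - μ(D) |` of a finite set `X ⊆ O`. -/
def discrepancy (μ : Measure (RoI K)) (X : Finset (RoI K)) : ℝ :=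
  ⨆ D : {D : Set (RoI K) // IsDisc K q D},
    |(Nat.card ↥((X : Set (RoI K)) ∩ D.1) : ℝ) / (X.card : ℝ) - (μ D.1).toReal|

variable (π : RoI K)

/-- The `i`-th point `m_i = a_0 + a_1 π + ⋯ + a_{λ-1} π^{λ-1}` in the dictionary
ordering of the coefficient strings `(a_0, …, a_{λ-1})` with respect to the
indexing of the coset representatives `S`. -/
def beerPoint (S : ℕ → RoI K) (lam i : ℕ) : RoI K :=
  ∑ j ∈ Finset.range lam, S (i / q ^ (lam - 1 - j) % q) * π ^ j

/-- `V_λ(f) = sup_{x_i ∈ E_i} Σ_{i=1}^{q^λ - 1} |f(x_i) - f(x_{i-1})|` over the ordered Beer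
partition `E_0, …, E_{q^λ - 1}` of level `λ`. -/
def VBeerLevel (S : ℕ → RoI K) (f : RoI K → ℝ) (lam : ℕ) : ℝ≥0∞ :=
  ⨆ x : {x : ℕ → RoI K // ∀ i < q ^ lam, x i ∈ disc K q (beerPoint K q π S lam i) lam},
    ∑ i ∈ Finset.Ico 1 (q ^ lam), ENNReal.ofReal |f (x.1 i) - f (x.1 (i - 1))|

/-- The Beer variation `V_Beer(f) = lim_{λ→∞} V_λ(f) = sup_{λ ≥ 1} V_λ(f)`. -/
def VBeer (S : ℕ → RoI K) (f : RoI K → ℝ) : ℝ≥0∞ :=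
  ⨆ lam : ℕ, VBeerLevel K q π S f (lam + 1)

/-- `S : ℕ → O` (through indices `0, …, q-1`) is a complete ordered system of coset
representatives for the residue field `O/πO`, containing `0`. -/
def IsRepSystem (S : ℕ → RoI K) : Prop :=
  (∃ i, i < q ∧ S i = 0) ∧
    Function.Bijective fun i : Fin q => Ideal.Quotient.mk (Ideal.span {π}) (S (i : ℕ))

/-- The Berkovich-analytic variation
`V_Berk(f) = Σ_D Σ_{D' ≺ D} |f(D') - f(D)|`, where `D' ≺ D` means `D' ⊆ D` and
`μ(D') = μ(D)/q`, and `f(D)` denotes the average of `f` over `D`. -/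
def VBerk (μ : Measure (RoI K)) (f : RoI K → ℝ) : ℝ≥0∞ :=
  ∑' D : {D : Set (RoI K) // IsDisc K q D},
    ∑' D' : {D' : Set (RoI K) // IsDisc K q D' ∧ D' ⊆ D.1 ∧ μ D' = μ D.1 / (q : ℝ≥0∞)},
      ENNReal.ofReal |(⨍ x in D'.1, f x ∂μ) - ⨍ x in D.1, f x ∂μ|

/-- The level `ℓ(γ)` of a character `γ : O → 𝕋`: the least `ℓ ≥ 0` such that `γ` is trivial
on `π^ℓ O`. -/
def charLevel (γ : AddChar (RoI K) Circle) : ℕ :=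
  sInf {l : ℕ | ∀ y : RoI K, γ (π ^ l * y) = 1}

/-- The Fourier coefficient `f̂(γ) = ∫_O f(x) conj(γ(x)) dμ(x)`. -/
def fourierCoeff (μ : Measure (RoI K)) (f : RoI K → ℂ) (γ : AddChar (RoI K) Circle) : ℂ :=
  ∫ x, f x * (starRingEnd ℂ) ((γ x : Circle) : ℂ) ∂μ

/-- The Fourier-analytic variation `V_Fourier(f) = Σ_{γ ≠ γ₀} q^{ℓ(γ)} |f̂(γ)|`, the sum over
all nontrivial continuous characters of `O`. -/
def VFourier (μ : Measure (RoI K)) (f : RoI K → ℝ) : ℝ≥0∞ :=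
  ∑' γ : {γ : AddChar (RoI K) Circle // Continuous ⇑γ ∧ γ ≠ 1},
    ENNReal.ofReal ((q : ℝ) ^ charLevel K π γ.1 * ‖fourierCoeff K μ (fun x => (f x : ℂ)) γ.1‖)

/-- A function is a finite linear combination of characteristic functions of discs. -/
def IsDiscSimple (g : RoI K → ℝ) : Prop :=
  ∃ (P : Finset (Set (RoI K))) (c : Set (RoI K) → ℝ),
    (∀ D ∈ P, IsDisc K q D) ∧ g = fun x => ∑ D ∈ P, c D * D.indicator 1 x

/-- Integrability in the sense of Beer: `f` can be squeezed between finite linear combinations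
of characteristic functions of discs with integrals converging to each other. -/
def BeerIntegrable [MeasurableSpace K] (μ : Measure (RoI K)) (f : RoI K → ℝ) : Prop :=
  ∃ u v : ℕ → RoI K → ℝ,
    (∀ n, IsDiscSimple K q (u n)) ∧ (∀ n, IsDiscSimple K q (v n)) ∧
    (∀ n x, u n x ≤ f x ∧ f x ≤ v n x) ∧
    Tendsto (fun n => ∫ x, (v n x - u n x) ∂μ) atTop (𝓝 0)


/-- base-q digit sum reconstructs `i % q^lam`. -/
lemma digit_sum (q : ℕ) (hq : 1 < q) : ∀ (lam i : ℕ),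
    (∑ m ∈ Finset.range lam, i / q ^ m % q * q ^ m) = i % q ^ lam := by
  intro lam
  induction lam with
  | zero => simp [Nat.mod_one]
  | succ n ih =>
    intro i
    rw [Finset.sum_range_succ, ih]
    have hq0 : 0 < q ^ n := Nat.pow_pos (n := n) (by omega)
    have h1 : i % q ^ (n + 1) % q ^ n = i % q ^ n :=
      Nat.mod_mod_of_dvd i (pow_dvd_pow q (by omega))
    have h2 : i % q ^ (n + 1) / q ^ n = i / q ^ n % q := by
      rw [pow_succ, Nat.mod_mul_right_div_self]
    have := Nat.div_add_mod (i % q ^ (n + 1)) (q ^ n)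
    rw [h1, h2] at this
    have h3 : q ^ n * (i / q ^ n % q) = i / q ^ n % q * q ^ n := Nat.mul_comm _ _
    omega

lemma digits_inj (q : ℕ) (hq : 1 < q) {lam i j : ℕ} (hi : i < q ^ lam) (hj : j < q ^ lam)
    (h : ∀ k < lam, i / q ^ (lam - 1 - k) % q = j / q ^ (lam - 1 - k) % q) : i = j := by
  have hs : ∀ m : ℕ, (∑ k ∈ Finset.range lam, m / q ^ (lam - 1 - k) % q * q ^ (lam - 1 - k))
      = m % q ^ lam := by
    intro m
    exact (Finset.sum_range_reflect (fun k => m / q ^ k % q * q ^ k) lam).trans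
      (digit_sum q hq lam m)
  have h1 := hs i
  have h2 := hs j
  rw [Finset.sum_congr rfl (fun k hk => by
    rw [h k (Finset.mem_range.mp hk)])] at h1
  rw [h1] at h2
  rwa [Nat.mod_eq_of_lt hi, Nat.mod_eq_of_lt hj] at h2

/-- compatibility of digits with the top-`n` quotient. -/
lemma digit_div (q : ℕ) {lam n k i : ℕ} (hk : k < n) (hn : n ≤ lam) :
    i / q ^ (lam - n) / q ^ (n - 1 - k) = i / q ^ (lam - 1 - k) := by
  rw [Nat.div_div_eq_div_mul, ← pow_add]
  congr 2
  omega

lemma quot_eq_of_digits_eq (q : ℕ) (hq : 1 < q) {lam n i j : ℕ} (hn : n ≤ lam)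
    (hi : i < q ^ lam) (hj : j < q ^ lam)
    (h : ∀ k < n, i / q ^ (lam - 1 - k) % q = j / q ^ (lam - 1 - k) % q) :
    i / q ^ (lam - n) = j / q ^ (lam - n) := by
  have hq0 : 0 < q ^ (lam - n) := Nat.pow_pos (by omega)
  have key : ∀ m : ℕ, m < q ^ lam → m / q ^ (lam - n) < q ^ n := by
    intro m hm
    rw [Nat.div_lt_iff_lt_mul hq0, ← pow_add]
    have : lam - n + n = lam := by omega
    rw [add_comm, this]
    exact hm
  refine digits_inj q hq (key i hi) (key j hj) ?_
  intro k hk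
  rw [digit_div q hk hn, digit_div q hk hn]
  exact h k hk

lemma digits_eq_of_quot_eq (q : ℕ) {lam n i j : ℕ} (hn : n ≤ lam)
    (h : i / q ^ (lam - n) = j / q ^ (lam - n)) :
    ∀ k < n, i / q ^ (lam - 1 - k) % q = j / q ^ (lam - 1 - k) % q := by
  intro k hk
  rw [← digit_div q hk hn, ← digit_div q hk hn, h]

/-- telescoping bound. -/
lemma telescope (g : ℕ → ℝ) : ∀ (a b : ℕ), a ≤ b →
    ENNReal.ofReal |g b - g a| ≤
      ∑ i ∈ Finset.Ico (a + 1) (b + 1), ENNReal.ofReal |g i - g (i - 1)| := by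
  intro a b hab
  induction b, hab using Nat.le_induction with
  | base => simp
  | succ n hn ih =>
    rw [Finset.sum_Ico_succ_top (by omega)]
    have h1 : |g (n + 1) - g a| ≤ |g n - g a| + |g (n + 1) - g (n + 1 - 1)| := by
      simp only [Nat.add_sub_cancel]
      have := abs_sub_abs_le_abs_sub (g (n+1) - g a) (g n - g a)
      calc |g (n + 1) - g a| = |(g n - g a) + (g (n+1) - g n)| := by ring_nf
        _ ≤ |g n - g a| + |g (n+1) - g n| := abs_add_le _ _
    calc ENNReal.ofReal |g (n+1) - g a|
        ≤ ENNReal.ofReal (|g n - g a| + |g (n + 1) - g (n + 1 - 1)|) := ENNReal.ofReal_le_ofReal h1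
      _ ≤ ENNReal.ofReal |g n - g a| + ENNReal.ofReal |g (n + 1) - g (n + 1 - 1)| :=
          ENNReal.ofReal_add_le
      _ ≤ _ := add_le_add_left ih _

/-- Reduction: a finite sum of double suprema is bounded by `C` if every choice is. -/
lemma sum_biSup_le {ι α : Type*} (P : Finset ι) (s : ι → Set α)
    (hne : ∀ D ∈ P, (s D).Nonempty) (F : ι → α → α → ℝ≥0∞) (C : ℝ≥0∞)
    (h : ∀ x y : ι → α, (∀ D ∈ P, x D ∈ s D) → (∀ D ∈ P, y D ∈ s D) →
      ∑ D ∈ P, F D (x D) (y D) ≤ C) :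
    ∑ D ∈ P, ⨆ a ∈ s D, ⨆ b ∈ s D, F D a b ≤ C := by
  classical
  induction P using Finset.induction_on generalizing C with
  | empty => simpa using zero_le C
  | @insert D₀ P' hD₀ ih =>
    rw [Finset.sum_insert hD₀]
    have hne₀ : (s D₀).Nonempty := hne D₀ (Finset.mem_insert_self _ _)
    rw [ENNReal.biSup_add hne₀]
    refine iSup₂_le fun a ha => ?_
    rw [ENNReal.biSup_add hne₀]
    refine iSup₂_le fun b hb => ?_
    -- base choice functions
    have pick : ∀ D, ∃ c : α, (D ∈ insert D₀ P' → c ∈ s D) := by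
      intro D
      by_cases hD : D ∈ insert D₀ P'
      · exact ⟨(hne D hD).choose, fun _ => (hne D hD).choose_spec⟩
      · exact ⟨a, fun hc => absurd hc hD⟩
    choose c hc using pick
    have hxy : ∀ x y : ι → α, (∀ D ∈ P', x D ∈ s D) → (∀ D ∈ P', y D ∈ s D) →
        F D₀ a b + ∑ D ∈ P', F D (x D) (y D) ≤ C := by
      intro x y hx hy
      have := h (Function.update x D₀ a) (Function.update y D₀ b)
        (fun D hD => by
          rcases Finset.mem_insert.mp hD with rfl | hD2
          · simp [ha]
          · have hne' : D ≠ D₀ := by rintro rfl; exact hD₀ hD2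
            rw [Function.update_of_ne hne']; exact hx D hD2)
        (fun D hD => by
          rcases Finset.mem_insert.mp hD with rfl | hD2
          · simp [hb]
          · have hne' : D ≠ D₀ := by rintro rfl; exact hD₀ hD2
            rw [Function.update_of_ne hne']; exact hy D hD2)
      rwa [Finset.sum_insert hD₀, Function.update_self, Function.update_self,
        Finset.sum_congr rfl (fun D hD => by
          have hne' : D ≠ D₀ := by rintro rfl; exact hD₀ hD
          rw [Function.update_of_ne hne', Function.update_of_ne hne'])] at this
    have hF0 : F D₀ a b ≤ C := by
      have := hxy c c (fun D hD => hc D (Finset.mem_insert_of_mem hD))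
        (fun D hD => hc D (Finset.mem_insert_of_mem hD))
      exact le_trans (le_add_right le_rfl : F D₀ a b ≤ _) this
    by_cases hFtop : F D₀ a b = ∞
    · have : C = ∞ := top_le_iff.mp (hFtop ▸ hF0)
      simp [this]
    have hrest : ∑ D ∈ P', ⨆ x ∈ s D, ⨆ y ∈ s D, F D x y ≤ C - F D₀ a b := by
      refine ih (fun D hD => hne D (Finset.mem_insert_of_mem hD)) _ ?_
      intro x y hx hy
      exact (ENNReal.cancel_of_ne hFtop).le_tsub_of_add_le_left (hxy x y hx hy)
    calc F D₀ a b + ∑ D ∈ P', ⨆ x ∈ s D, ⨆ y ∈ s D, F D x y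
        ≤ F D₀ a b + (C - F D₀ a b) := add_le_add_right hrest _
      _ ≤ C := by rw [add_tsub_cancel_of_le hF0]


section Machinery

variable {K q π}

lemma mem_disc_iff (hq : 1 < q) (a x : RoI K) (n : ℕ) :
    x ∈ disc K q a n ↔ ‖(x : K) - (a : K)‖ ≤ ((q : ℝ)⁻¹) ^ n := by
  have hq0 : (q : ℝ) ≠ 0 := by positivity
  rw [disc, Set.mem_setOf_eq, zpow_neg, zpow_natCast, ← inv_pow]

lemma ultra3 (a b c : K) : ‖a - c‖ ≤ max ‖a - b‖ ‖b - c‖ := by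
  simpa using IsUltrametricDist.norm_add_le_max (a - b) (b - c)

lemma S_sub_norm (hq : 1 < q) (hπ : ‖(π : K)‖ = (q : ℝ)⁻¹)
    (hunif : ∀ x : RoI K, ‖(x : K)‖ < 1 → ‖(x : K)‖ ≤ ‖(π : K)‖)
    {S : ℕ → RoI K} (hS : IsRepSystem K q π S)
    {i j : ℕ} (hi : i < q) (hj : j < q) (hij : i ≠ j) :
    ‖(S i : K) - (S j : K)‖ = 1 := by
  have hle : ‖(S i : K) - (S j : K)‖ ≤ 1 := by
    have := IsUltrametricDist.norm_add_le_max ((S i : K)) (-(S j : K))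
    rw [norm_neg, ← sub_eq_add_neg] at this
    exact this.trans (max_le (S i).2 (S j).2)
  rcases lt_or_eq_of_le hle with hlt | heq
  · exfalso
    set z : RoI K := S i - S j with hz
    have hzc : ((z : K)) = (S i : K) - (S j : K) := by simp [hz]
    have hz1 : ‖(z : K)‖ < 1 := by rw [hzc]; exact hlt
    have hzπ : ‖(z : K)‖ ≤ ‖(π : K)‖ := hunif z hz1
    have hπ0 : ((π : K)) ≠ 0 := by
      intro h0
      rw [h0, norm_zero] at hπ
      have : (0:ℝ) < (q:ℝ)⁻¹ := by positivity
      rw [← hπ] at this; exact lt_irrefl _ this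
    have hw : ‖(z : K) / (π : K)‖ ≤ 1 := by
      rw [norm_div, div_le_one (by rw [hπ]; positivity)]
      exact hzπ
    set w : RoI K := ⟨(z : K) / (π : K), hw⟩ with hwdef
    have hzw : z = π * w := by
      apply Subtype.ext
      show (z : K) = (π : K) * ((z : K) / (π : K))
      rw [mul_div_cancel₀ _ hπ0]
    have hmem : z ∈ Ideal.span ({π} : Set (RoI K)) :=
      Ideal.mem_span_singleton.mpr ⟨w, hzw⟩
    have hmk : Ideal.Quotient.mk (Ideal.span {π}) (S i) =
        Ideal.Quotient.mk (Ideal.span {π}) (S j) :=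
      Ideal.Quotient.mk_eq_mk_iff_sub_mem _ _ |>.mpr hmem
    have := hS.2.1 (a₁ := ⟨i, hi⟩) (a₂ := ⟨j, hj⟩) hmk
    exact hij (congrArg Fin.val this)
  · exact heq

lemma beerPoint_coe (S : ℕ → RoI K) (lam i : ℕ) :
    ((beerPoint K q π S lam i : RoI K) : K) =
      ∑ j ∈ Finset.range lam, (S (i / q ^ (lam - 1 - j) % q) : K) * (π : K) ^ j := by
  rw [beerPoint]
  push_cast
  rfl

lemma bp_sub_eq (S : ℕ → RoI K) (lam i j : ℕ) :
    ((beerPoint K q π S lam i : RoI K) : K) - ((beerPoint K q π S lam j : RoI K) : K) =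
      ∑ k ∈ Finset.range lam,
        ((S (i / q ^ (lam - 1 - k) % q) : K) - (S (j / q ^ (lam - 1 - k) % q) : K)) *
          (π : K) ^ k := by
  rw [beerPoint_coe, beerPoint_coe, ← Finset.sum_sub_distrib]
  exact Finset.sum_congr rfl fun k _ => (sub_mul _ _ _).symm

lemma bp_dist_le (hq : 1 < q) (hπ : ‖(π : K)‖ = (q : ℝ)⁻¹) (S : ℕ → RoI K)
    {lam n i j : ℕ} (hn : n ≤ lam)
    (hd : ∀ k < n, i / q ^ (lam - 1 - k) % q = j / q ^ (lam - 1 - k) % q) :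
    ‖((beerPoint K q π S lam i : RoI K) : K) - (beerPoint K q π S lam j : K)‖ ≤
      ((q : ℝ)⁻¹) ^ n := by
  rw [bp_sub_eq]
  have hr0 : (0:ℝ) ≤ (q : ℝ)⁻¹ := by positivity
  have hr1 : ((q : ℝ)⁻¹) ≤ 1 := by
    rw [inv_le_one_iff₀]; right; exact_mod_cast hq.le
  refine IsUltrametricDist.norm_sum_le_of_forall_le_of_nonneg (by positivity) ?_
  intro k hk
  by_cases hkn : k < n
  · rw [hd k hkn, sub_self, zero_mul, norm_zero]; positivity
  · push_neg at hkn
    rw [norm_mul, norm_pow, hπ]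
    calc ‖(S (i / q ^ (lam - 1 - k) % q) : K) - (S (j / q ^ (lam - 1 - k) % q) : K)‖ *
          ((q:ℝ)⁻¹) ^ k
        ≤ 1 * ((q:ℝ)⁻¹) ^ k := by
          refine mul_le_mul_of_nonneg_right ?_ (by positivity)
          have := IsUltrametricDist.norm_add_le_max
            ((S (i / q ^ (lam - 1 - k) % q) : K)) (-(S (j / q ^ (lam - 1 - k) % q) : K))
          rw [norm_neg, ← sub_eq_add_neg] at this
          exact this.trans (max_le (S _).2 (S _).2)
      _ = ((q:ℝ)⁻¹) ^ k := one_mul _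
      _ ≤ ((q:ℝ)⁻¹) ^ n := pow_le_pow_of_le_one hr0 hr1 hkn

lemma bp_norm_eq (hq : 1 < q) (hπ : ‖(π : K)‖ = (q : ℝ)⁻¹)
    (hunif : ∀ x : RoI K, ‖(x : K)‖ < 1 → ‖(x : K)‖ ≤ ‖(π : K)‖)
    {S : ℕ → RoI K} (hS : IsRepSystem K q π S)
    {lam i j : ℕ} (hi : i < q ^ lam) (hj : j < q ^ lam) (hij : i ≠ j) :
    ∃ m < lam, (∀ k < m, i / q ^ (lam - 1 - k) % q = j / q ^ (lam - 1 - k) % q) ∧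
      ‖((beerPoint K q π S lam i : RoI K) : K) - (beerPoint K q π S lam j : K)‖ =
        ((q : ℝ)⁻¹) ^ m := by
  classical
  have hq0 : 0 < q := by omega
  have hr0 : (0:ℝ) < (q : ℝ)⁻¹ := by
    have : (0:ℝ) < (q:ℝ) := by exact_mod_cast hq0
    positivity
  have hr1 : ((q : ℝ)⁻¹) < 1 := by
    rw [inv_lt_one_iff₀]; right; exact_mod_cast hq
  have hex : ∃ k, i / q ^ (lam - 1 - k) % q ≠ j / q ^ (lam - 1 - k) % q ∧ k < lam := by
    by_contra hcon
    push_neg at hcon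
    refine hij (digits_inj q hq hi hj ?_)
    intro k hk
    by_contra hne
    exact hk.not_ge (hcon k hne)
  obtain ⟨k₀, hk₀⟩ := hex
  have hexm : ∃ k, i / q ^ (lam - 1 - k) % q ≠ j / q ^ (lam - 1 - k) % q := ⟨k₀, hk₀.1⟩
  let m := Nat.find hexm
  have hm_spec : i / q ^ (lam - 1 - m) % q ≠ j / q ^ (lam - 1 - m) % q :=
    Nat.find_spec hexm
  have hm_min : ∀ k < m, i / q ^ (lam - 1 - k) % q = j / q ^ (lam - 1 - k) % q := by
    intro k hk
    by_contra hne
    exact (Nat.find_min hexm hk) hne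
  have hm_lt : m < lam := by
    have : m ≤ k₀ := Nat.find_le hk₀.1
    omega
  refine ⟨m, hm_lt, hm_min, ?_⟩
  rw [bp_sub_eq]
  set t : ℕ → K := fun k =>
    ((S (i / q ^ (lam - 1 - k) % q) : K) - (S (j / q ^ (lam - 1 - k) % q) : K)) * (π : K) ^ k
    with ht
  have hmmem : m ∈ Finset.range lam := Finset.mem_range.mpr hm_lt
  have hsplit : ∑ k ∈ Finset.range lam, t k = t m + ∑ k ∈ (Finset.range lam).erase m, t k :=
    (Finset.add_sum_erase _ t hmmem).symm
  have htm : ‖t m‖ = ((q:ℝ)⁻¹) ^ m := by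
    rw [ht]
    simp only
    rw [norm_mul, norm_pow, hπ,
      S_sub_norm hq hπ hunif hS (Nat.mod_lt _ hq0) (Nat.mod_lt _ hq0) hm_spec, one_mul]
  have hrest : ‖∑ k ∈ (Finset.range lam).erase m, t k‖ ≤ ((q:ℝ)⁻¹) ^ (m + 1) := by
    refine IsUltrametricDist.norm_sum_le_of_forall_le_of_nonneg (by positivity) ?_
    intro k hk
    obtain ⟨hkm, hkr⟩ := Finset.mem_erase.mp hk
    rcases lt_or_gt_of_ne hkm with hlt | hgt
    · rw [ht]; simp only
      rw [hm_min k hlt, sub_self, zero_mul, norm_zero]; positivity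
    · rw [ht]; simp only
      rw [norm_mul, norm_pow, hπ]
      calc _ ≤ 1 * ((q:ℝ)⁻¹) ^ k := by
              refine mul_le_mul_of_nonneg_right ?_ (by positivity)
              have := IsUltrametricDist.norm_add_le_max
                ((S (i / q ^ (lam - 1 - k) % q) : K)) (-(S (j / q ^ (lam - 1 - k) % q) : K))
              rw [norm_neg, ← sub_eq_add_neg] at this
              exact this.trans (max_le (S _).2 (S _).2)
        _ = ((q:ℝ)⁻¹) ^ k := one_mul _
        _ ≤ ((q:ℝ)⁻¹) ^ (m + 1) := pow_le_pow_of_le_one hr0.le hr1.le hgt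
  have hne' : ‖t m‖ ≠ ‖∑ k ∈ (Finset.range lam).erase m, t k‖ := by
    rw [htm]
    intro hEq
    have : ((q:ℝ)⁻¹) ^ m ≤ ((q:ℝ)⁻¹) ^ (m + 1) := hEq ▸ hrest
    have hlt : ((q:ℝ)⁻¹) ^ (m+1) < ((q:ℝ)⁻¹) ^ m :=
      pow_lt_pow_right_of_lt_one₀ hr0 hr1 (Nat.lt_succ_self m)
    linarith
  have hle2 : ‖∑ k ∈ (Finset.range lam).erase m, t k‖ ≤ ‖t m‖ :=
    hrest.trans (by
      rw [htm]
      exact (pow_lt_pow_right_of_lt_one₀ hr0 hr1 (Nat.lt_succ_self m)).le)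
  rw [hsplit, IsUltrametricDist.norm_add_eq_max_of_norm_ne_norm hne', max_eq_left hle2, htm]

lemma existsIdx (hq : 1 < q) (hπ : ‖(π : K)‖ = (q : ℝ)⁻¹)
    {S : ℕ → RoI K} (hS : IsRepSystem K q π S) :
    ∀ (lam : ℕ) (x : RoI K), ∃ i, i < q ^ lam ∧
      ‖(x : K) - (beerPoint K q π S lam i : K)‖ ≤ ((q : ℝ)⁻¹) ^ lam := by
  have hq0 : 0 < q := by omega
  intro lam
  induction lam with
  | zero =>
    intro x
    refine ⟨0, by simp, ?_⟩
    have : ((beerPoint K q π S 0 0 : RoI K) : K) = 0 := by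
      rw [beerPoint_coe]; simp
    rw [this, sub_zero, pow_zero]
    exact x.2
  | succ lam ih =>
    intro x
    obtain ⟨i0f, hi0⟩ := hS.2.2 (Ideal.Quotient.mk (Ideal.span {π}) x)
    set i0 : ℕ := (i0f : ℕ) with hi0def
    have hi0q : i0 < q := i0f.2
    have hsub : x - S i0 ∈ Ideal.span ({π} : Set (RoI K)) := by
      have := (Ideal.Quotient.mk_eq_mk_iff_sub_mem (S i0) x).mp hi0
      have h2 : x - S i0 = -(S i0 - x) := by ring
      rw [h2]
      exact neg_mem this
    obtain ⟨y, hy⟩ := Ideal.mem_span_singleton.mp hsub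
    obtain ⟨i', hi', hnorm⟩ := ih y
    refine ⟨i0 * q ^ lam + i', ?_, ?_⟩
    · calc i0 * q ^ lam + i' < i0 * q ^ lam + q ^ lam := by omega
        _ = (i0 + 1) * q ^ lam := by ring
        _ ≤ q * q ^ lam := Nat.mul_le_mul_right _ (by omega)
        _ = q ^ (lam + 1) := (pow_succ' q lam).symm
    · set i : ℕ := i0 * q ^ lam + i' with hidef
      have hdig : ∀ j < lam, i / q ^ (lam + 1 - 1 - (j + 1)) % q
          = i' / q ^ (lam - 1 - j) % q := by
        intro j hj
        have he : lam + 1 - 1 - (j + 1) = lam - 1 - j := by omega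
        rw [he]
        have hq0' : 0 < q ^ (lam - 1 - j) := Nat.pow_pos hq0
        have hsplit2 : i0 * q ^ lam = i0 * q ^ (j + 1) * q ^ (lam - 1 - j) := by
          rw [mul_assoc, ← pow_add]
          congr 2
          omega
        rw [hidef, hsplit2, Nat.add_comm, Nat.add_mul_div_right _ _ hq0']
        have : i0 * q ^ (j + 1) = i0 * q ^ j * q := by rw [mul_assoc, ← pow_succ]
        rw [this, Nat.add_mul_mod_self_right]
      have hd0 : i / q ^ (lam + 1 - 1 - 0) % q = i0 := by
        simp only [Nat.sub_zero, Nat.add_sub_cancel]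
        rw [hidef, Nat.add_comm, Nat.add_mul_div_right _ _ (Nat.pow_pos hq0),
          Nat.div_eq_of_lt hi', Nat.zero_add, Nat.mod_eq_of_lt hi0q]
      have hbp : beerPoint K q π S (lam + 1) i = S i0 + π * beerPoint K q π S lam i' := by
        rw [beerPoint, Finset.sum_range_succ']
        rw [Finset.sum_congr rfl (fun j hj => by
          rw [hdig j (Finset.mem_range.mp hj)])]
        rw [hd0, pow_zero, mul_one, beerPoint, Finset.mul_sum]
        rw [Finset.sum_congr rfl (fun j _ => by
          rw [pow_succ' (π : RoI K) j, mul_left_comm])]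
        exact add_comm _ _
      have hyK : (x : K) - (S i0 : K) = (π : K) * (y : K) := by
        have := congrArg (fun z : RoI K => (z : K)) hy
        push_cast at this
        exact this
      have hcoe : ((beerPoint K q π S (lam + 1) i : RoI K) : K)
          = (S i0 : K) + (π : K) * (beerPoint K q π S lam i' : K) := by
        rw [hbp]; push_cast; ring
      rw [hcoe]
      have heq2 : (x : K) - ((S i0 : K) + (π : K) * (beerPoint K q π S lam i' : K))
          = (π : K) * ((y : K) - (beerPoint K q π S lam i' : K)) := by
        rw [mul_sub, ← hyK]; ring
      rw [heq2, norm_mul, hπ, pow_succ']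
      exact mul_le_mul_of_nonneg_left hnorm (by positivity)

lemma block_out (hq : 1 < q) (hπ : ‖(π : K)‖ = (q : ℝ)⁻¹)
    (hunif : ∀ x : RoI K, ‖(x : K)‖ < 1 → ‖(x : K)‖ ≤ ‖(π : K)‖)
    {S : ℕ → RoI K} (hS : IsRepSystem K q π S)
    {lam n i ia : ℕ} (hn : n ≤ lam) (hi : i < q ^ lam) (hia : ia < q ^ lam)
    {a x : RoI K}
    (hxa : ‖(a : K) - (beerPoint K q π S lam ia : K)‖ ≤ ((q : ℝ)⁻¹) ^ lam)
    (hx : ‖(x : K) - (beerPoint K q π S lam i : K)‖ ≤ ((q : ℝ)⁻¹) ^ lam)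
    (hxd : ‖(x : K) - (a : K)‖ ≤ ((q : ℝ)⁻¹) ^ n) :
    i / q ^ (lam - n) = ia / q ^ (lam - n) := by
  have hq0 : 0 < q := by omega
  have hqR : (0:ℝ) < (q:ℝ) := by exact_mod_cast hq0
  have hr0 : (0:ℝ) < (q : ℝ)⁻¹ := by positivity
  have hr1 : ((q : ℝ)⁻¹) < 1 := by rw [inv_lt_one_iff₀]; right; exact_mod_cast hq
  by_cases hiia : i = ia
  · rw [hiia]
  have hlamn : ((q:ℝ)⁻¹) ^ lam ≤ ((q:ℝ)⁻¹) ^ n := pow_le_pow_of_le_one hr0.le hr1.le hn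
  have hcc : ‖((beerPoint K q π S lam i : RoI K) : K) - (beerPoint K q π S lam ia : K)‖ ≤
      ((q : ℝ)⁻¹) ^ n := by
    have h1 := ultra3 ((beerPoint K q π S lam i : RoI K) : K) (x : K)
      ((beerPoint K q π S lam ia : RoI K) : K)
    have h2 := ultra3 (x : K) (a : K) ((beerPoint K q π S lam ia : RoI K) : K)
    have hx' : ‖((beerPoint K q π S lam i : RoI K) : K) - (x : K)‖ ≤ ((q:ℝ)⁻¹) ^ n := by
      rw [norm_sub_rev]; exact hx.trans hlamn
    have ha' : ‖(a : K) - ((beerPoint K q π S lam ia : RoI K) : K)‖ ≤ ((q:ℝ)⁻¹) ^ n :=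
      hxa.trans hlamn
    exact h1.trans (max_le hx' (h2.trans (max_le hxd ha')))
  obtain ⟨m, _, hdig, hnorm⟩ := bp_norm_eq hq hπ hunif hS hi hia hiia
  rw [hnorm] at hcc
  have hnm : n ≤ m := by
    by_contra hlt
    push_neg at hlt
    have := pow_lt_pow_right_of_lt_one₀ hr0 hr1 hlt
    linarith
  exact quot_eq_of_digits_eq q hq hn hi hia (fun k hk => hdig k (lt_of_lt_of_le hk hnm))

lemma block_in (hq : 1 < q) (hπ : ‖(π : K)‖ = (q : ℝ)⁻¹) (S : ℕ → RoI K)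
    {lam n i ia : ℕ} (hn : n ≤ lam)
    (hquot : i / q ^ (lam - n) = ia / q ^ (lam - n))
    {a x : RoI K}
    (hxa : ‖(a : K) - (beerPoint K q π S lam ia : K)‖ ≤ ((q : ℝ)⁻¹) ^ lam)
    (hx : ‖(x : K) - (beerPoint K q π S lam i : K)‖ ≤ ((q : ℝ)⁻¹) ^ lam) :
    ‖(x : K) - (a : K)‖ ≤ ((q : ℝ)⁻¹) ^ n := by
  have hq0 : 0 < q := by omega
  have hqR : (0:ℝ) < (q:ℝ) := by exact_mod_cast hq0
  have hr0 : (0:ℝ) < (q : ℝ)⁻¹ := by positivity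
  have hr1 : ((q : ℝ)⁻¹) < 1 := by rw [inv_lt_one_iff₀]; right; exact_mod_cast hq
  have hlamn : ((q:ℝ)⁻¹) ^ lam ≤ ((q:ℝ)⁻¹) ^ n := pow_le_pow_of_le_one hr0.le hr1.le hn
  have hcc : ‖((beerPoint K q π S lam i : RoI K) : K) - (beerPoint K q π S lam ia : K)‖ ≤
      ((q : ℝ)⁻¹) ^ n :=
    bp_dist_le hq hπ S hn (digits_eq_of_quot_eq q hn hquot)
  have h1 := ultra3 (x : K) ((beerPoint K q π S lam i : RoI K) : K) (a : K)
  have h2 := ultra3 ((beerPoint K q π S lam i : RoI K) : K)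
    ((beerPoint K q π S lam ia : RoI K) : K) (a : K)
  have ha' : ‖((beerPoint K q π S lam ia : RoI K) : K) - (a : K)‖ ≤ ((q:ℝ)⁻¹) ^ n := by
    rw [norm_sub_rev]; exact hxa.trans hlamn
  exact h1.trans (max_le (hx.trans hlamn) (h2.trans (max_le hcc ha')))

lemma main_sum_le (hq : 1 < q) (hπ : ‖(π : K)‖ = (q : ℝ)⁻¹)
    (hunif : ∀ x : RoI K, ‖(x : K)‖ < 1 → ‖(x : K)‖ ≤ ‖(π : K)‖)
    {S : ℕ → RoI K} (hS : IsRepSystem K q π S) (f : RoI K → ℝ)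
    (P : Finset (Set (RoI K))) (hdisc : ∀ D ∈ P, IsDisc K q D)
    (hdisj : (P : Set (Set (RoI K))).PairwiseDisjoint id)
    (xc yc : Set (RoI K) → RoI K)
    (hxc : ∀ D ∈ P, xc D ∈ D) (hyc : ∀ D ∈ P, yc D ∈ D)
    (hxyne : ∀ D ∈ P, xc D ≠ yc D) :
    ∑ D ∈ P, ENNReal.ofReal (f (xc D) - f (yc D)) ≤ VBeer K q π S f := by
  classical
  have hq0 : 0 < q := by omega
  have hqR : (0:ℝ) < (q:ℝ) := by exact_mod_cast hq0
  have hr0 : (0:ℝ) < (q : ℝ)⁻¹ := by positivity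
  have hr1 : ((q : ℝ)⁻¹) < 1 := by rw [inv_lt_one_iff₀]; right; exact_mod_cast hq
  have hdisc' : ∀ D ∈ P, ∃ (c : RoI K) (n : ℕ), D = disc K q c n := hdisc
  choose! av nn ha using hdisc'
  have hmm : ∀ D ∈ P, ∃ m : ℕ, ((q:ℝ)⁻¹) ^ m < ‖(xc D : K) - (yc D : K)‖ := by
    intro D hD
    have hpos : 0 < ‖(xc D : K) - (yc D : K)‖ := by
      rw [norm_pos_iff, sub_ne_zero]
      exact fun h => hxyne D hD (Subtype.coe_injective h)
    exact exists_pow_lt_of_lt_one hpos hr1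
  choose! mm hmm' using hmm
  set lam := P.sup (fun D => max (nn D) (mm D)) + 1 with hlamdef
  have hnnle : ∀ D ∈ P, nn D ≤ lam := by
    intro D hD
    rw [hlamdef]
    exact le_trans (le_trans (le_max_left _ _)
      (Finset.le_sup (f := fun D => max (nn D) (mm D)) hD)) (Nat.le_succ _)
  have hmmle : ∀ D ∈ P, mm D ≤ lam := by
    intro D hD
    rw [hlamdef]
    exact le_trans (le_trans (le_max_right _ _)
      (Finset.le_sup (f := fun D => max (nn D) (mm D)) hD)) (Nat.le_succ _)
  obtain ⟨Idx, hIdx⟩ := Classical.axiomOfChoice (existsIdx hq hπ hS lam)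
  have hIdx1 : ∀ z : RoI K, Idx z < q ^ lam := fun z => (hIdx z).1
  have hIdx2 : ∀ z : RoI K,
      ‖(z : K) - (beerPoint K q π S lam (Idx z) : K)‖ ≤ ((q:ℝ)⁻¹) ^ lam :=
    fun z => (hIdx z).2
  have hcenter : ∀ i : ℕ,
      ‖((beerPoint K q π S lam i : RoI K) : K) - (beerPoint K q π S lam i : K)‖ ≤
        ((q:ℝ)⁻¹) ^ lam := by
    intro i; rw [sub_self, norm_zero]; positivity
  -- from membership to quotient and back
  have hquotof : ∀ D ∈ P, ∀ i < q ^ lam, ∀ z : RoI K,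
      ‖(z : K) - (beerPoint K q π S lam i : K)‖ ≤ ((q:ℝ)⁻¹) ^ lam → z ∈ D →
      i / q ^ (lam - nn D) = Idx (av D) / q ^ (lam - nn D) := by
    intro D hD i hi z hz hzD
    rw [ha D hD, mem_disc_iff hq] at hzD
    exact block_out hq hπ hunif hS (hnnle D hD) hi (hIdx1 (av D)) (hIdx2 (av D)) hz hzD
  have hofquot : ∀ D ∈ P, ∀ i : ℕ,
      i / q ^ (lam - nn D) = Idx (av D) / q ^ (lam - nn D) →
      ∀ w : RoI K, ‖(w : K) - (beerPoint K q π S lam i : K)‖ ≤ ((q:ℝ)⁻¹) ^ lam →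
      w ∈ D := by
    intro D hD i hquot w hw
    rw [ha D hD, mem_disc_iff hq]
    exact block_in hq hπ S (hnnle D hD) hquot (hIdx2 (av D)) hw
  -- if a Beer disc meets two members of P, they coincide
  have hmeet : ∀ D ∈ P, ∀ D' ∈ P, ∀ i, i < q ^ lam →
      (∃ z : RoI K, ‖(z : K) - (beerPoint K q π S lam i : K)‖ ≤ ((q:ℝ)⁻¹) ^ lam ∧ z ∈ D) →
      (∃ z' : RoI K, ‖(z' : K) - (beerPoint K q π S lam i : K)‖ ≤ ((q:ℝ)⁻¹) ^ lam ∧ z' ∈ D') →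
      D = D' := by
    intro D hD D' hD' i hi ⟨z, hz, hzD⟩ ⟨z', hz', hzD'⟩
    by_contra hDD
    have hc1 : (beerPoint K q π S lam i : RoI K) ∈ D :=
      hofquot D hD i (hquotof D hD i hi z hz hzD) _ (hcenter i)
    have hc2 : (beerPoint K q π S lam i : RoI K) ∈ D' :=
      hofquot D' hD' i (hquotof D' hD' i hi z' hz' hzD') _ (hcenter i)
    exact Set.disjoint_left.mp (hdisj (Finset.mem_coe.mpr hD) (Finset.mem_coe.mpr hD') hDD)
      hc1 hc2
  have hIxy : ∀ D ∈ P, Idx (xc D) ≠ Idx (yc D) := by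
    intro D hD hEq
    have h2 := hIdx2 (yc D)
    rw [← hEq] at h2
    have h1 : ‖(xc D : K) - (yc D : K)‖ ≤ ((q:ℝ)⁻¹) ^ lam := by
      have h3 := ultra3 ((xc D : RoI K) : K) ((beerPoint K q π S lam (Idx (xc D)) : RoI K) : K)
        ((yc D : RoI K) : K)
      have h4 : ‖((beerPoint K q π S lam (Idx (xc D)) : RoI K) : K) - (yc D : K)‖ ≤
          ((q:ℝ)⁻¹) ^ lam := by rw [norm_sub_rev]; exact h2
      exact h3.trans (max_le (hIdx2 (xc D)) h4)
    have h5 : ((q:ℝ)⁻¹) ^ lam ≤ ((q:ℝ)⁻¹) ^ (mm D) :=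
      pow_le_pow_of_le_one hr0.le hr1.le (hmmle D hD)
    have h6 := hmm' D hD
    linarith
  -- the point selection
  set χ : ℕ → RoI K := fun i =>
    if h1 : ∃ D, D ∈ P ∧ Idx (xc D) = i then xc h1.choose
    else if h2 : ∃ D, D ∈ P ∧ Idx (yc D) = i then yc h2.choose
    else beerPoint K q π S lam i with hχdef
  have hχmem : ∀ i, i < q ^ lam → χ i ∈ disc K q (beerPoint K q π S lam i) lam := by
    intro i hi
    rw [mem_disc_iff hq]
    by_cases h1 : ∃ D, D ∈ P ∧ Idx (xc D) = i
    · rw [hχdef]; simp only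
      rw [dif_pos h1]
      have := hIdx2 (xc h1.choose)
      rwa [h1.choose_spec.2] at this
    · by_cases h2 : ∃ D, D ∈ P ∧ Idx (yc D) = i
      · rw [hχdef]; simp only
        rw [dif_neg h1, dif_pos h2]
        have := hIdx2 (yc h2.choose)
        rwa [h2.choose_spec.2] at this
      · rw [hχdef]; simp only
        rw [dif_neg h1, dif_neg h2]
        exact hcenter i
  have hevalx : ∀ D ∈ P, χ (Idx (xc D)) = xc D := by
    intro D hD
    have h1 : ∃ D', D' ∈ P ∧ Idx (xc D') = Idx (xc D) := ⟨D, hD, rfl⟩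
    rw [hχdef]; simp only
    rw [dif_pos h1]
    obtain ⟨hD', hIdxEq⟩ := h1.choose_spec
    have hDD : h1.choose = D := by
      refine hmeet _ hD' _ hD (Idx (xc D)) (hIdx1 (xc D))
        ⟨xc h1.choose, ?_, hxc _ hD'⟩ ⟨xc D, hIdx2 (xc D), hxc D hD⟩
      have := hIdx2 (xc h1.choose)
      rwa [hIdxEq] at this
    rw [hDD]
  have hevaly : ∀ D ∈ P, χ (Idx (yc D)) = yc D := by
    intro D hD
    have h1 : ¬ ∃ D', D' ∈ P ∧ Idx (xc D') = Idx (yc D) := by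
      rintro ⟨D', hD', hEq⟩
      have hDD : D' = D := by
        refine hmeet _ hD' _ hD (Idx (yc D)) (hIdx1 (yc D))
          ⟨xc D', ?_, hxc _ hD'⟩ ⟨yc D, hIdx2 (yc D), hyc D hD⟩
        have := hIdx2 (xc D')
        rwa [hEq] at this
      exact hIxy D hD (by rw [← hDD] at hEq ⊢; exact hEq)
    have h2 : ∃ D', D' ∈ P ∧ Idx (yc D') = Idx (yc D) := ⟨D, hD, rfl⟩
    rw [hχdef]; simp only
    rw [dif_neg h1, dif_pos h2]
    obtain ⟨hD', hIdxEq⟩ := h2.choose_spec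
    have hDD : h2.choose = D := by
      refine hmeet _ hD' _ hD (Idx (yc D)) (hIdx1 (yc D))
        ⟨yc h2.choose, ?_, hyc _ hD'⟩ ⟨yc D, hIdx2 (yc D), hyc D hD⟩
      have := hIdx2 (yc h2.choose)
      rwa [hIdxEq] at this
    rw [hDD]
  -- the index intervals
  set lo : Set (RoI K) → ℕ := fun D => min (Idx (xc D)) (Idx (yc D)) with hlodef
  set hg : Set (RoI K) → ℕ := fun D => max (Idx (xc D)) (Idx (yc D)) with hhgdef
  have hhgq : ∀ D, hg D < q ^ lam := fun D => max_lt (hIdx1 (xc D)) (hIdx1 (yc D))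
  have hblockmem : ∀ D ∈ P, ∀ i, lo D ≤ i → i ≤ hg D →
      ∀ w : RoI K, ‖(w : K) - (beerPoint K q π S lam i : K)‖ ≤ ((q:ℝ)⁻¹) ^ lam → w ∈ D := by
    intro D hD i h1 h2 w hw
    have hiq : i < q ^ lam := lt_of_le_of_lt h2 (hhgq D)
    have hqx := hquotof D hD (Idx (xc D)) (hIdx1 (xc D)) (xc D) (hIdx2 (xc D)) (hxc D hD)
    have hqy := hquotof D hD (Idx (yc D)) (hIdx1 (yc D)) (yc D) (hIdx2 (yc D)) (hyc D hD)
    have hqlo : lo D / q ^ (lam - nn D) = Idx (av D) / q ^ (lam - nn D) := by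
      rcases min_choice (Idx (xc D)) (Idx (yc D)) with h | h
      · rw [hlodef]; simp only; rw [h]; exact hqx
      · rw [hlodef]; simp only; rw [h]; exact hqy
    have hqhg : hg D / q ^ (lam - nn D) = Idx (av D) / q ^ (lam - nn D) := by
      rcases max_choice (Idx (xc D)) (Idx (yc D)) with h | h
      · rw [hhgdef]; simp only; rw [h]; exact hqx
      · rw [hhgdef]; simp only; rw [h]; exact hqy
    have hmono1 : lo D / q ^ (lam - nn D) ≤ i / q ^ (lam - nn D) := Nat.div_le_div_right h1
    have hmono2 : i / q ^ (lam - nn D) ≤ hg D / q ^ (lam - nn D) := Nat.div_le_div_right h2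
    have hqi : i / q ^ (lam - nn D) = Idx (av D) / q ^ (lam - nn D) := by
      rw [hqlo] at hmono1
      rw [hqhg] at hmono2
      omega
    exact hofquot D hD i hqi w hw
  set T : Set (RoI K) → Finset ℕ := fun D => Finset.Ico (lo D + 1) (hg D + 1) with hTdef
  have hTdisj : (P : Set (Set (RoI K))).PairwiseDisjoint T := by
    intro D hD D' hD' hDD'
    simp only [Function.onFun]
    refine Finset.disjoint_left.mpr ?_
    intro i hiT hiT'
    rw [hTdef] at hiT hiT'
    simp only [Finset.mem_Ico] at hiT hiT'
    have hw1 : (beerPoint K q π S lam i : RoI K) ∈ D :=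
      hblockmem D (Finset.mem_coe.mp hD) i (by omega) (by omega) _ (hcenter i)
    have hw2 : (beerPoint K q π S lam i : RoI K) ∈ D' :=
      hblockmem D' (Finset.mem_coe.mp hD') i (by omega) (by omega) _ (hcenter i)
    exact Set.disjoint_left.mp (hdisj hD hD' hDD') hw1 hw2
  have hsum1 : ∀ D ∈ P, ENNReal.ofReal (f (xc D) - f (yc D)) ≤
      ∑ i ∈ T D, ENNReal.ofReal |f (χ i) - f (χ (i - 1))| := by
    intro D hD
    have htel := telescope (fun n => f (χ n)) (lo D) (hg D) (min_le_max)
    refine le_trans ?_ htel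
    apply ENNReal.ofReal_le_ofReal
    rcases le_total (Idx (xc D)) (Idx (yc D)) with hcase | hcase
    · have hlo2 : lo D = Idx (xc D) := min_eq_left hcase
      have hhi2 : hg D = Idx (yc D) := max_eq_right hcase
      simp only [hlo2, hhi2, hevalx D hD, hevaly D hD]
      rw [abs_sub_comm]
      exact le_abs_self _
    · have hlo2 : lo D = Idx (yc D) := min_eq_right hcase
      have hhi2 : hg D = Idx (xc D) := max_eq_left hcase
      simp only [hlo2, hhi2, hevalx D hD, hevaly D hD]
      exact le_abs_self _
  calc ∑ D ∈ P, ENNReal.ofReal (f (xc D) - f (yc D))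
      ≤ ∑ D ∈ P, ∑ i ∈ T D, ENNReal.ofReal |f (χ i) - f (χ (i - 1))| :=
        Finset.sum_le_sum hsum1
    _ = ∑ i ∈ P.biUnion T, ENNReal.ofReal |f (χ i) - f (χ (i - 1))| :=
        (Finset.sum_biUnion hTdisj).symm
    _ ≤ ∑ i ∈ Finset.Ico 1 (q ^ lam), ENNReal.ofReal |f (χ i) - f (χ (i - 1))| := by
        refine Finset.sum_le_sum_of_subset ?_
        intro i hi
        obtain ⟨D, hD, hiT⟩ := Finset.mem_biUnion.mp hi
        rw [hTdef] at hiT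
        simp only [Finset.mem_Ico] at hiT ⊢
        have := hhgq D
        omega
    _ ≤ VBeerLevel K q π S f lam := le_iSup_of_le ⟨χ, hχmem⟩ le_rfl
    _ ≤ VBeer K q π S f := by
        rw [VBeer]
        exact le_iSup (fun l => VBeerLevel K q π S f (l + 1))
          (P.sup (fun D => max (nn D) (mm D)))

end Machinery

variable [LocallyCompactSpace K] [BorelSpace K]

theorem VTaib_le_VBeer
    (hq : 1 < q)
    (hπ : ‖(π : K)‖ = (q : ℝ)⁻¹)
    (hunif : ∀ x : RoI K, ‖(x : K)‖ < 1 → ‖(x : K)‖ ≤ ‖(π : K)‖)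
    (hres : Nat.card (↥(RoI K) ⧸ (Ideal.span {π} : Ideal ↥(RoI K))) = q)
    (S : ℕ → RoI K) (hS : IsRepSystem K q π S)
    (f : RoI K → ℝ) :
    VTaib K q f ≤ VBeer K q π S f := by
  classical
  rw [VTaib]
  refine iSup_le ?_
  rintro ⟨P, hP⟩
  have hq0 : 0 < q := by omega
  have hqR : (0:ℝ) < (q:ℝ) := by exact_mod_cast hq0
  show VPi K f P ≤ VBeer K q π S f
  rw [VPi]
  have hne : ∀ D ∈ P, (D : Set (RoI K)).Nonempty := by
    intro D hD
    obtain ⟨c, n, rfl⟩ := hP.1 D hD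
    refine ⟨c, ?_⟩
    rw [mem_disc_iff hq, sub_self, norm_zero]
    positivity
  refine sum_biSup_le P (fun D => D) hne (fun _ x y => ENNReal.ofReal (f x - f y)) _ ?_
  intro xc yc hxc hyc
  rw [← Finset.sum_filter_of_ne (p := fun D => xc D ≠ yc D) (fun D _ hne0 hEq => by simp [hEq] at hne0)]
  refine main_sum_le hq hπ hunif hS f _ ?_ ?_ xc yc ?_ ?_ ?_
  · exact fun D hD => hP.1 D (Finset.mem_filter.mp hD).1
  · exact hP.2.1.subset (Finset.coe_subset.mpr (Finset.filter_subset _ P))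
  · exact fun D hD => hxc D (Finset.mem_filter.mp hD).1
  · exact fun D hD => hyc D (Finset.mem_filter.mp hD).1
  · exact fun D hD => (Finset.mem_filter.mp hD).2

end NAKoksma
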